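/- Let D be a triangulated category with partial silting object P, and set Z_P = ^{⊥_{>0}}P ∩ P^{⊥_{>0}}. The restriction of the truncation functor σ_P^{>0}: Z_P → P^{⊥_ℤ} induces a fully faithful additive functor from the ideal quotient Z_P/[P] to P^{⊥_ℤ}, where [P] is the ideal of morphisms factoring through add(P). -/

import Mathlib

open CategoryTheory Limits Pretriangulated ZeroObject

universe v u

namespace Paper

variable {C : Type u} [Category.{v} C] [Preadditive C] [HasZeroObject C]
  [HasShift C ℤ] [∀ n : ℤ, (CategoryTheory.shiftFunctor C n).Additive] [Pretriangulated C]
  [HasBinaryBiproducts C]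

/-- A class of objects closed under isomorphism. -/
def ClosedIso (P : C → Prop) : Prop := ∀ ⦃X Y : C⦄, (X ≅ Y) → P X → P Y

/-- A class of objects closed under extensions. -/
def ExtClosed (P : C → Prop) : Prop :=
  ∀ T : Triangle C, T ∈ (distTriang C) → P T.obj₁ → P T.obj₃ → P T.obj₂

/-- A suspended subcategory: additive (iso-closed, contains 0, closed under finite sums via
extensions), closed under the suspension `Σ = ⟦1⟧` and under extensions. -/
structure Suspended (P : C → Prop) : Prop where
  iso : ClosedIso P
  zero : P 0
  shift : ∀ ⦃X : C⦄, P X → P (X⟦(1:ℤ)⟧)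
  ext : ExtClosed P

/-- A t-structure `(L, G) = (D^{≤0}, D^{>0})`: Hom-orthogonality, every object is an extension,
`L` is suspended; both classes are closed under isomorphism. -/
structure IsTStr (L G : C → Prop) : Prop where
  isoL : ClosedIso L
  isoG : ClosedIso G
  zeroL : L 0
  homZero : ∀ ⦃X Y : C⦄, L X → G Y → ∀ f : X ⟶ Y, f = 0
  trunc : ∀ X : C, ∃ (A B : C) (f : A ⟶ X) (g : X ⟶ B) (h : B ⟶ A⟦(1:ℤ)⟧),
    Triangle.mk f g h ∈ (distTriang C) ∧ L A ∧ G B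
  shiftL : ∀ ⦃X : C⦄, L X → L (X⟦(1:ℤ)⟧)
  extL : ExtClosed L

/-- The right orthogonal `U^{⊥₀}` of a class of objects. -/
def rightOrth (U : C → Prop) (Y : C) : Prop := ∀ X : C, U X → ∀ f : X ⟶ Y, f = 0

/-- `Y ∈ P^{⊥_{≤ m}}`: `Hom(P, Σ^i Y) = 0` for all `i ≤ m`. -/
def perpLe (P : C) (m : ℤ) (Y : C) : Prop := ∀ i : ℤ, i ≤ m → ∀ f : P ⟶ Y⟦i⟧, f = 0

/-- `Y ∈ P^{⊥_{> m}}`: `Hom(P, Σ^i Y) = 0` for all `i > m`. -/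
def perpGt (P : C) (m : ℤ) (Y : C) : Prop := ∀ i : ℤ, m < i → ∀ f : P ⟶ Y⟦i⟧, f = 0

/-- `Y ∈ P^{⊥_ℤ}`: `Hom(P, Σ^i Y) = 0` for all integers `i`. -/
def perpZ (P : C) (Y : C) : Prop := ∀ i : ℤ, ∀ f : P ⟶ Y⟦i⟧, f = 0

/-- `X ∈ ^{⊥_{>0}}P`: `Hom(X, Σ^i P) = 0` for all `i > 0`. -/
def leftPerpGt0 (P : C) (X : C) : Prop := ∀ i : ℤ, 0 < i → ∀ f : X ⟶ P⟦i⟧, f = 0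

/-- `susp(P)`, the smallest suspended subcategory containing `P`. -/
def suspObj (P : C) (X : C) : Prop := ∀ U : C → Prop, Suspended U → U P → U X

/-- An additive subcategory closed under direct summands. -/
structure AddSub (U : C → Prop) : Prop where
  iso : ClosedIso U
  zero : U 0
  biprod : ∀ X Y : C, U X → U Y → U (X ⊞ Y)
  summand : ∀ X Y : C, U (X ⊞ Y) → U X

/-- `add(P)`: the additive closure of `P` (finite direct sums of direct summands). -/
def addObj (P : C) (X : C) : Prop := ∀ U : C → Prop, AddSub U → U P → U X

/-- A thick triangulated subcategory. -/
structure ThickSub (U : C → Prop) : Prop where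
  iso : ClosedIso U
  zero : U 0
  shift : ∀ ⦃X : C⦄, U X → ∀ n : ℤ, U (X⟦n⟧)
  ext : ExtClosed U
  summand : ∀ X Y : C, U (X ⊞ Y) → U X

/-- `thick(P)`: the smallest thick subcategory containing `P`. -/
def thickObj (P : C) (X : C) : Prop := ∀ U : C → Prop, ThickSub U → U P → U X

/-- A triangulated subcategory (iso-closed, shift-closed both ways, extension-closed). -/
structure TriangSub (U : C → Prop) : Prop where
  iso : ClosedIso U
  zero : U 0
  shift : ∀ ⦃X : C⦄, U X → ∀ n : ℤ, U (X⟦n⟧)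
  ext : ExtClosed U

/-- `P` is presilting: `Hom(P, Σ^n P) = 0` for all `n > 0`. -/
def Presilting (P : C) : Prop := ∀ n : ℤ, 0 < n → ∀ f : P ⟶ P⟦n⟧, f = 0

/-- `P` is partial silting: `(susp(P), P^{⊥_{≤0}})` is a t-structure and
`susp(P) ⊆ P^{⊥_{>0}}`. -/
def PartialSilting (P : C) : Prop :=
  IsTStr (suspObj P) (perpLe P 0) ∧ ∀ X : C, suspObj P X → perpGt P 0 X

/-- `S` is silting: partial silting with `susp(S) = S^{⊥_{>0}}`. -/
def Silting (S : C) : Prop :=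
  PartialSilting S ∧ ∀ X : C, suspObj S X ↔ perpGt S 0 X

/-- `X ∈ D^{≤ n}` for the t-structure with aisle `L`. -/
def DLe (L : C → Prop) (n : ℤ) (X : C) : Prop := L (X⟦n⟧)

/-- `X ∈ D^{> m}` for the t-structure with co-aisle `G`. -/
def DGt (G : C → Prop) (m : ℤ) (X : C) : Prop := G (X⟦m⟧)

/-- The t-structure `(L, G)` is bounded. -/
def BoundedTStr (L G : C → Prop) : Prop :=
  ∀ X : C, (∃ n : ℤ, DLe L n X) ∧ (∃ m : ℤ, DGt G m X)

/-- `H` is (a choice of) the `i`-th cohomology `H^i(X) = σ^{≤ i} σ^{> i-1} X` of `X` with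
respect to the t-structure `(L, G)`, expressed by the two truncation triangles. -/
def IsCohomAt (L G : C → Prop) (i : ℤ) (X H : C) : Prop :=
  ∃ (A B B' : C) (f : A ⟶ X) (g : X ⟶ B) (h : B ⟶ A⟦(1:ℤ)⟧)
    (f' : H ⟶ B) (g' : B ⟶ B') (h' : B' ⟶ H⟦(1:ℤ)⟧),
    Triangle.mk f g h ∈ (distTriang C) ∧ DLe L (i-1) A ∧ DGt G (i-1) B ∧
    Triangle.mk f' g' h' ∈ (distTriang C) ∧ DLe L i H ∧ DGt G i B'

/-- The heart `D^0 = D^{≤0} ∩ D^{>-1}` of the t-structure `(L, G)`. -/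
def Heart (L G : C → Prop) (X : C) : Prop := L X ∧ DGt G (-1) X

/-- A t-exact subcategory: a triangulated subcategory closed under the truncation `σ^{≤0}`
of the t-structure `(L, G)`. -/
def TExactSub (L G : C → Prop) (S : C → Prop) : Prop :=
  TriangSub S ∧
    ∀ (X A B : C) (f : A ⟶ X) (g : X ⟶ B) (h : B ⟶ A⟦(1:ℤ)⟧),
      S X → Triangle.mk f g h ∈ (distTriang C) → L A → G B → S A


/-- The class of objects `U` admits coreflections: every object has a couniversal morphism
from `U`, i.e. the inclusion of `U` admits a right adjoint. -/
def HasCoreflections (U : C → Prop) : Prop :=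
  ∀ X : C, ∃ (A : C) (ε : A ⟶ X), U A ∧
    ∀ A' : C, U A' → ∀ g : A' ⟶ X, ∃! g' : A' ⟶ A, g' ≫ ε = g

/-- `X` is a `2_S`-term object: `X ∈ add(S) * Σ add(S)`. -/
def TwoTerm (S X : C) : Prop :=
  ∃ (S₁ S₀ : C) (f : S₁ ⟶ S₀) (g : S₀ ⟶ X) (h : X ⟶ S₁⟦(1:ℤ)⟧),
    Triangle.mk f g h ∈ (distTriang C) ∧ addObj S S₁ ∧ addObj S S₀

/-- `X` is indecomposable. -/
def Indec (X : C) : Prop :=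
  ¬ IsZero X ∧ ∀ Y Z : C, (X ≅ Y ⊞ Z) → IsZero Y ∨ IsZero Z

/-- `add(A)` is contravariantly finite: every object admits a right `add(A)`-approximation. -/
def ContravFinAdd (A : C) : Prop :=
  ∀ X : C, ∃ (Q : C) (q : Q ⟶ X), addObj A Q ∧
    ∀ Q' : C, addObj A Q' → ∀ g : Q' ⟶ X, ∃ g' : Q' ⟶ Q, g' ≫ q = g

/-- `S` is a bounded silting object. -/
def BoundedSilting (S : C) : Prop :=
  Silting S ∧ BoundedTStr (suspObj S) (perpLe S 0)

/-- Hom-finiteness of `C` over a field `k`. -/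
def HomFinite (k : Type w) [Field k] [Linear k C] : Prop :=
  ∀ X Y : C, FiniteDimensional k (X ⟶ Y)

/-- The Krull–Schmidt property: every object is a finite direct sum of objects with local
endomorphism rings. -/
def KrullSchmidt : Prop :=
  ∀ X : C, ∃ l : List C, (∀ Y ∈ l, IsLocalRing (End Y)) ∧
    Nonempty (X ≅ l.foldr (· ⊞ ·) 0)

/-- A wide subcategory of the heart of the t-structure `(L, G)`: closed under isomorphisms,
extensions, kernels and cokernels (the latter two expressed via cones and cohomology). -/
structure HeartWide (L G W : C → Prop) : Prop where
  sub : ∀ ⦃X : C⦄, W X → Heart L G X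
  iso : ClosedIso W
  ext : ∀ (X Y Z : C) (f : X ⟶ Y) (g : Y ⟶ Z) (h : Z ⟶ X⟦(1:ℤ)⟧),
    W X → W Z → Heart L G Y → Triangle.mk f g h ∈ (distTriang C) → W Y
  kerCoker : ∀ (X Y Z : C) (f : X ⟶ Y) (g : Y ⟶ Z) (h : Z ⟶ X⟦(1:ℤ)⟧),
    W X → W Y → Triangle.mk f g h ∈ (distTriang C) →
    (∀ K : C, IsCohomAt L G (-1) Z K → W K) ∧ (∀ Q : C, IsCohomAt L G 0 Z Q → W Q)

/-- The subgroup of relations defining `K₀` of the thick subcategory `S`. -/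
def K0Rel (S : C → Prop) : AddSubgroup (FreeAbelianGroup C) :=
  AddSubgroup.closure
    {x | (∃ X : C, ¬ S X ∧ x = FreeAbelianGroup.of X) ∨
      ∃ T : Triangle C, T ∈ (distTriang C) ∧ S T.obj₁ ∧ S T.obj₂ ∧ S T.obj₃ ∧
        x = FreeAbelianGroup.of T.obj₂ - FreeAbelianGroup.of T.obj₁
          - FreeAbelianGroup.of T.obj₃}

/-- The Grothendieck group of the (thick) subcategory `S`. -/
abbrev K0 (S : C → Prop) := FreeAbelianGroup C ⧸ K0Rel S

/-- The class `[X]` in the Grothendieck group. -/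
def K0cls (S : C → Prop) (X : C) : K0 S :=
  QuotientAddGroup.mk (FreeAbelianGroup.of X)

/-- A `2_S`-term presilting sequence `(X₁, …, X_t)` in the ambient subcategory `Amb` with respect
to the silting object `S`, defined recursively: the last term `X` is an indecomposable `2_S`-term
presilting object, and the truncated sequence is a `2_{σ^{>0}_X T}`-term presilting sequence in
`Amb ∩ X^{⊥_ℤ}`, where `T = X ⊕ Q` is the Bongartz completion of `X`. -/
inductive PresiltSeq : (C → Prop) → C → List C → Prop
  | nil (Amb : C → Prop) (S : C) : PresiltSeq Amb S []
  | cons (Amb : C → Prop) (S X : C) (l : List C)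
      (hX : Amb X) (h2 : TwoTerm S X) (hpre : Presilting X) (hind : Indec X)
      -- Bongartz completion `T = X ⊞ Q`, via an approximation triangle `S → Q → X₀ → ΣS`
      (Q X₀ : C) (i : S ⟶ Q) (p : Q ⟶ X₀) (β : X₀ ⟶ S⟦(1:ℤ)⟧)
      (hB : Triangle.mk i p β ∈ (distTriang C)) (hX₀ : addObj X X₀)
      (happrox : ∀ X' : C, addObj X X' → ∀ g : X' ⟶ S⟦(1:ℤ)⟧, ∃ g', g' ≫ β = g)
      -- the truncation `T' = σ^{>0}_X (X ⊞ Q)`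
      (T' A : C) (f : A ⟶ X ⊞ Q) (g : X ⊞ Q ⟶ T') (h : T' ⟶ A⟦(1:ℤ)⟧)
      (hTr : Triangle.mk f g h ∈ (distTriang C)) (hA : suspObj X A) (hT' : perpLe X 0 T')
      (hrest : PresiltSeq (fun Y => Amb Y ∧ perpZ X Y) T' l) :
      PresiltSeq Amb S (l ++ [X])


section Aux

lemma addObj_self (P : C) : addObj P P := fun _ _ h => h

lemma addObj_zeroObj (P : C) : addObj P 0 := fun U hU _ => hU.zero

lemma addObj_biprod (P : C) {X Y : C} (hX : addObj P X) (hY : addObj P Y) :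
    addObj P (X ⊞ Y) := fun U hU hP => hU.biprod X Y (hX U hU hP) (hY U hU hP)

lemma hom_zero_of_addObj (P Z : C) (h : ∀ f : P ⟶ Z, f = 0) :
    ∀ Q : C, addObj P Q → ∀ f : Q ⟶ Z, f = 0 := by
  intro Q hQ
  refine hQ (fun Q => ∀ f : Q ⟶ Z, f = 0) ?_ h
  constructor
  · intro A B e hA f
    have h0 := hA (e.hom ≫ f)
    calc f = e.inv ≫ (e.hom ≫ f) := by simp
      _ = 0 := by rw [h0, comp_zero]
  · intro f
    exact (isZero_zero C).eq_of_src f 0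
  · intro A B hA hB f
    apply biprod.hom_ext'
    · rw [comp_zero, hA (biprod.inl ≫ f)]
    · rw [comp_zero, hB (biprod.inr ≫ f)]
  · intro A B hAB f
    have h0 := hAB (biprod.desc f 0)
    calc f = biprod.inl ≫ biprod.desc f 0 := by simp
      _ = 0 := by rw [h0, comp_zero]

lemma susp_suspended (P : C) : Suspended (suspObj P) where
  iso := fun _ _ e hX U hU hP => hU.iso e (hX U hU hP)
  zero := fun U hU _ => hU.zero
  shift := fun _ hX U hU hP => hU.shift (hX U hU hP)
  ext := fun T hT h1 h3 U hU hP => hU.ext T hT (h1 U hU hP) (h3 U hU hP)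

lemma suspObj_self (P : C) : suspObj P P := fun _ _ h => h

lemma hom_zero_of_perpLe (P B : C) (hB : perpLe P 0 B) : ∀ f : P ⟶ B, f = 0 := by
  intro f
  have h0 := hB 0 le_rfl (f ≫ (shiftFunctorZero C ℤ).inv.app B)
  calc f = (f ≫ (shiftFunctorZero C ℤ).inv.app B) ≫ (shiftFunctorZero C ℤ).hom.app B := by simp
    _ = 0 := by rw [h0, zero_comp]

lemma leftPerp_hom_zero (P X : C) (hX : leftPerpGt0 P X) :
    ∀ A : C, suspObj P A → ∀ i : ℤ, 0 < i → ∀ f : X ⟶ A⟦i⟧, f = 0 := by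
  intro A hA
  refine hA (fun A => ∀ i : ℤ, 0 < i → ∀ f : X ⟶ A⟦i⟧, f = 0) ?_ hX
  constructor
  · intro A B e h i hi f
    have h0 := h i hi (f ≫ (shiftFunctor C i).map e.inv)
    calc f = (f ≫ (shiftFunctor C i).map e.inv) ≫ (shiftFunctor C i).map e.hom := by
          rw [Category.assoc, ← Functor.map_comp, e.inv_hom_id,
            CategoryTheory.Functor.map_id, Category.comp_id]
      _ = 0 := by rw [h0, zero_comp]
  · intro i hi f
    exact (Functor.map_isZero _ (isZero_zero C)).eq_of_tgt f 0
  · intro A h i hi f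
    have h0 := h (1 + i) (by omega) (f ≫ (shiftFunctorAdd' C 1 i (1 + i) rfl).inv.app A)
    calc f = (f ≫ (shiftFunctorAdd' C 1 i (1 + i) rfl).inv.app A) ≫
          (shiftFunctorAdd' C 1 i (1 + i) rfl).hom.app A := by simp
      _ = 0 := by rw [h0, zero_comp]
  · intro T hT h1 h3 i hi f
    have hT' := Pretriangulated.Triangle.shift_distinguished T hT i
    set T' := (CategoryTheory.shiftFunctor (Triangle C) i).obj T with hT'def
    have hf2 : f ≫ T'.mor₂ = 0 := h3 i hi (f ≫ T'.mor₂)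
    obtain ⟨g, hg⟩ := Triangle.coyoneda_exact₂ T' hT' f hf2
    rw [hg, h1 i hi g]; exact zero_comp

lemma factor_through_addObj (P : C) (hP : PartialSilting P) (X : C) (hX : leftPerpGt0 P X) :
    ∀ A : C, suspObj P A → ∀ v : X ⟶ A,
      ∃ (Q : C) (p : X ⟶ Q) (q : Q ⟶ A), addObj P Q ∧ p ≫ q = v := by
  intro A hA
  suffices h : suspObj P A ∧ ∀ v : X ⟶ A,
      ∃ (Q : C) (p : X ⟶ Q) (q : Q ⟶ A), addObj P Q ∧ p ≫ q = v from h.2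
  refine hA (fun A => suspObj P A ∧ ∀ v : X ⟶ A,
      ∃ (Q : C) (p : X ⟶ Q) (q : Q ⟶ A), addObj P Q ∧ p ≫ q = v) ?_
    ⟨suspObj_self P, fun v => ⟨P, v, 𝟙 P, addObj_self P, Category.comp_id v⟩⟩
  constructor
  · rintro A B e ⟨hAs, hAf⟩
    refine ⟨(susp_suspended P).iso e hAs, fun v => ?_⟩
    obtain ⟨Q, p, q, hQ, hpq⟩ := hAf (v ≫ e.inv)
    refine ⟨Q, p, q ≫ e.hom, hQ, ?_⟩
    rw [← Category.assoc, hpq, Category.assoc, e.inv_hom_id, Category.comp_id]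
  · refine ⟨(susp_suspended P).zero, fun v => ⟨0, 0, 0, addObj_zeroObj P, ?_⟩⟩
    exact (isZero_zero C).eq_of_tgt _ _
  · rintro A ⟨hAs, hAf⟩
    refine ⟨(susp_suspended P).shift hAs, fun v => ⟨0, 0, 0, addObj_zeroObj P, ?_⟩⟩
    rw [leftPerp_hom_zero P X hX A hAs 1 one_pos v]
    simp
  · rintro T hT ⟨h1s, h1f⟩ ⟨h3s, h3f⟩
    refine ⟨(susp_suspended P).ext T hT h1s h3s, fun v => ?_⟩
    obtain ⟨Q, p, q, hQ, hpq⟩ := h3f (v ≫ T.mor₂)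
    have hq3 : q ≫ T.mor₃ = 0 :=
      hom_zero_of_addObj P (T.obj₁⟦(1:ℤ)⟧) (fun f => hP.2 T.obj₁ h1s 1 one_pos f) Q hQ _
    obtain ⟨q', hq'⟩ := Triangle.coyoneda_exact₃ T hT q hq3
    have hsub : (v - p ≫ q') ≫ T.mor₂ = 0 := by
      rw [Preadditive.sub_comp, Category.assoc, ← hq', hpq, sub_self]
    obtain ⟨w, hw⟩ := Triangle.coyoneda_exact₂ T hT _ hsub
    obtain ⟨Q₂, p₂, q₂, hQ₂, hpq₂⟩ := h1f w
    refine ⟨Q ⊞ Q₂, biprod.lift p p₂, biprod.desc q' (q₂ ≫ T.mor₁),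
      addObj_biprod P hQ hQ₂, ?_⟩
    rw [biprod.lift_desc, ← Category.assoc, hpq₂, ← hw]
    abel

end Aux

/-- For `X, Y ∈ Z_P = ^{⊥_{>0}}P ∩ P^{⊥_{>0}}`, the truncation `σ_P^{>0}`
induces a fully faithful functor `Z_P/[P] → P^{⊥_ℤ}`: it is full, it kills precisely the
morphisms factoring through `add(P)` (faithfulness of the induced functor), and it is
well defined on the quotient. -/
theorem statement11 (P : C) (hP : PartialSilting P)
    (X Y : C) (hX1 : leftPerpGt0 P X) (hX2 : perpGt P 0 X)
    (hY1 : leftPerpGt0 P Y) (hY2 : perpGt P 0 Y)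
    (AX BX : C) (fX : AX ⟶ X) (gX : X ⟶ BX) (hX' : BX ⟶ AX⟦(1:ℤ)⟧)
    (hTX : Triangle.mk fX gX hX' ∈ (distTriang C)) (hAX : suspObj P AX) (hBX : perpLe P 0 BX)
    (AY BY : C) (fY : AY ⟶ Y) (gY : Y ⟶ BY) (hY' : BY ⟶ AY⟦(1:ℤ)⟧)
    (hTY : Triangle.mk fY gY hY' ∈ (distTriang C)) (hAY : suspObj P AY) (hBY : perpLe P 0 BY) :
    -- fullness
    (∀ g : BX ⟶ BY, ∃ f : X ⟶ Y, gX ≫ g = f ≫ gY) ∧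
    -- faithfulness of the induced functor on the ideal quotient
    (∀ (f : X ⟶ Y) (g : BX ⟶ BY), gX ≫ g = f ≫ gY → g = 0 →
      ∃ (Q : C) (p : X ⟶ Q) (q : Q ⟶ Y), addObj P Q ∧ p ≫ q = f) ∧
    -- the induced functor kills the ideal `[P]`
    (∀ (f : X ⟶ Y) (g : BX ⟶ BY), gX ≫ g = f ≫ gY →
      (∃ (Q : C) (p : X ⟶ Q) (q : Q ⟶ Y), addObj P Q ∧ p ≫ q = f) → g = 0) := by
  refine ⟨?_, ?_, ?_⟩
  · intro g
    have hobs : (gX ≫ g) ≫ hY' = 0 :=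
      leftPerp_hom_zero P X hX1 AY hAY 1 one_pos ((gX ≫ g) ≫ hY')
    obtain ⟨f, hf⟩ := Triangle.coyoneda_exact₃ (Triangle.mk fY gY hY') hTY (gX ≫ g) hobs
    exact ⟨f, hf⟩
  · intro f g hcomm hg0
    have hf0 : f ≫ gY = 0 := by rw [← hcomm, hg0, comp_zero]
    obtain ⟨v, hv⟩ := Triangle.coyoneda_exact₂ (Triangle.mk fY gY hY') hTY f hf0
    obtain ⟨Q, p, q, hQ, hpq⟩ := factor_through_addObj P hP X hX1 AY hAY v
    exact ⟨Q, p, q ≫ fY, hQ, by rw [← Category.assoc, hpq]; exact hv.symm⟩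
  · rintro f g hcomm ⟨Q, p, q, hQ, hpq⟩
    have hq0 : q ≫ gY = 0 :=
      hom_zero_of_addObj P BY (hom_zero_of_perpLe P BY hBY) Q hQ (q ≫ gY)
    have hg : gX ≫ g = 0 := by
      rw [hcomm, ← hpq, Category.assoc, hq0, comp_zero]
    obtain ⟨u, hu⟩ := Triangle.yoneda_exact₂ (Triangle.mk fX gX hX').rotate
      (rot_of_distTriang _ hTX) g hg
    rw [hu, hP.1.homZero ((susp_suspended P).shift hAX) hBY u]; exact comp_zero


end Paper
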